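/- arXiv:1406.1610 — 2 statements merged into one kernel-verified Lean document; each statement's English description precedes it below -/
import Mathlib

section
/- Let N ≥ 1 and x, y ∈ ℝ^N, and let W_B denote the hyperoctahedral group of signed permutations of ℝ^N (compositions of coordinate permutations and sign changes of coordinates), acting on y. Then ∑_{ρ ∈ W_B} exp(x · ρy) = 2^N N! ∑_{μ} [m_μ((x)²) · m_μ((y)²)] / [(2μ)! · M(μ, N)], where the sum runs over all integer partitions μ with at most N parts (viewed as weakly decreasing vectors μ = (μ_1 ≥ … ≥ μ_N ≥ 0) in ℤ^N), (x)² = (x_1², …, x_N²), (2μ)! = ∏_{j=1}^N (2μ_j)!, m_μ is the monomial symmetric polynomial in N variables indexed by μ, and M(μ, N) is the number of distinct permutations of μ as an N-dimensional vector. -/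
open Finset

/-- The monomial symmetric polynomial `m_μ(x)`: the sum of the distinct monomials obtained
by permuting the exponent vector `μ`. -/
noncomputable def monoSym {N : ℕ} (μ : Fin N → ℕ) (x : Fin N → ℝ) : ℝ :=
  ∑ e ∈ Finset.image (fun σ : Equiv.Perm (Fin N) => μ ∘ σ) Finset.univ, ∏ j, x j ^ e j

/-- `M(μ, N)`: the number of distinct rearrangements of the exponent vector `μ`. -/
def numDistinctPerms {N : ℕ} (μ : Fin N → ℕ) : ℕ :=
  (Finset.image (fun σ : Equiv.Perm (Fin N) => μ ∘ σ) Finset.univ).card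

namespace SignedPermAux

variable {N : ℕ}

/-- The orbit of an exponent vector under permutation of coordinates. -/
def orbit (e : Fin N → ℕ) : Finset (Fin N → ℕ) :=
  Finset.image (fun σ : Equiv.Perm (Fin N) => e ∘ σ) Finset.univ

/-- The size of the stabilizer of `e` under permutations. -/
def stab (e : Fin N → ℕ) : ℕ :=
  (Finset.univ.filter (fun σ : Equiv.Perm (Fin N) => e ∘ σ = e)).card

lemma orbit_comp (e : Fin N → ℕ) (σ0 : Equiv.Perm (Fin N)) : orbit (e ∘ σ0) = orbit e := by
  ext f
  simp only [orbit, Finset.mem_image, Finset.mem_univ, true_and]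
  constructor
  · rintro ⟨σ, rfl⟩
    exact ⟨σ0 * σ, by ext i; simp [Equiv.Perm.mul_apply]⟩
  · rintro ⟨σ, rfl⟩
    exact ⟨σ0⁻¹ * σ, by ext i; simp [Equiv.Perm.mul_apply]⟩

lemma self_mem_orbit (e : Fin N → ℕ) : e ∈ orbit e := by
  simp only [orbit, Finset.mem_image, Finset.mem_univ, true_and]
  exact ⟨1, by ext i; simp⟩

lemma filter_card_eq_stab (e : Fin N → ℕ) (σ0 : Equiv.Perm (Fin N)) :
    (Finset.univ.filter (fun σ : Equiv.Perm (Fin N) => e ∘ σ = e ∘ σ0)).card = stab e := by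
  unfold stab
  apply Finset.card_bij' (fun τ _ => τ * σ0⁻¹) (fun ρ _ => ρ * σ0)
  · intro τ hτ
    simp only [Finset.mem_filter, Finset.mem_univ, true_and] at hτ ⊢
    ext i
    have := congrFun hτ (σ0⁻¹ i)
    simpa using this
  · intro ρ hρ
    simp only [Finset.mem_filter, Finset.mem_univ, true_and] at hρ ⊢
    ext i
    have := congrFun hρ (σ0 i)
    simpa using this
  · intro τ _; group
  · intro ρ _; group

lemma stab_mul_card (e : Fin N → ℕ) : stab e * (orbit e).card = Nat.factorial N := by
  have h := Finset.card_eq_sum_card_image (fun σ : Equiv.Perm (Fin N) => e ∘ σ)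
    (Finset.univ : Finset (Equiv.Perm (Fin N)))
  rw [Finset.card_univ, Fintype.card_perm, Fintype.card_fin] at h
  have h2 : ∀ b ∈ Finset.image (fun σ : Equiv.Perm (Fin N) => e ∘ σ) Finset.univ,
      (Finset.univ.filter (fun σ : Equiv.Perm (Fin N) => e ∘ σ = b)).card = stab e := by
    intro b hb
    simp only [Finset.mem_image, Finset.mem_univ, true_and] at hb
    obtain ⟨σ0, rfl⟩ := hb
    exact filter_card_eq_stab e σ0
  rw [Finset.sum_congr rfl h2, Finset.sum_const, smul_eq_mul] at h
  show stab e * (Finset.image (fun σ : Equiv.Perm (Fin N) => e ∘ σ) Finset.univ).card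
    = Nat.factorial N
  rw [mul_comm]
  exact h.symm

lemma stab_eq_of_mem (μ e : Fin N → ℕ) (σ0 : Equiv.Perm (Fin N)) (he : μ ∘ σ0 = e) :
    stab e = stab μ := by
  have h1 : orbit e = orbit μ := by rw [← he]; exact orbit_comp μ σ0
  have h2 := stab_mul_card e
  rw [h1, ← stab_mul_card μ] at h2
  have hpos : 0 < (orbit μ).card := Finset.card_pos.mpr ⟨μ, self_mem_orbit μ⟩
  exact Nat.eq_of_mul_eq_mul_right hpos h2

lemma sum_perm_pow (Y : Fin N → ℝ) (e : Fin N → ℕ) :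
    ∑ σ : Equiv.Perm (Fin N), ∏ i, Y (σ i) ^ e i
      = (stab e : ℝ) * ∑ f ∈ orbit e, ∏ j, Y j ^ f j := by
  have h1 : ∀ σ : Equiv.Perm (Fin N), ∏ i, Y (σ i) ^ e i = ∏ j, Y j ^ (e ∘ ⇑σ⁻¹) j := by
    intro σ
    rw [← Equiv.prod_comp σ (fun j => Y j ^ (e ∘ ⇑σ⁻¹) j)]
    refine Finset.prod_congr rfl fun i _ => ?_
    simp [Function.comp]
  simp_rw [h1]
  have h2 : ∑ σ : Equiv.Perm (Fin N), ∏ j, Y j ^ (e ∘ ⇑σ⁻¹) j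
      = ∑ σ : Equiv.Perm (Fin N), ∏ j, Y j ^ (e ∘ ⇑σ) j :=
    Fintype.sum_equiv (Equiv.inv (Equiv.Perm (Fin N))) _ _ (fun σ => by simp)
  rw [h2]
  rw [Finset.sum_comp (fun f : Fin N → ℕ => ∏ j, Y j ^ f j)
    (fun σ : Equiv.Perm (Fin N) => e ∘ σ)]
  rw [Finset.mul_sum]
  refine Finset.sum_congr rfl fun f hf => ?_
  simp only [orbit, Finset.mem_image, Finset.mem_univ, true_and] at hf
  obtain ⟨σ0, rfl⟩ := hf
  rw [filter_card_eq_stab e σ0, nsmul_eq_mul]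

/-- The antitone rearrangement of an exponent vector. -/
noncomputable def sortA (e : Fin N → ℕ) : Fin N → ℕ := (e ∘ Tuple.sort e) ∘ Fin.rev

lemma antitone_sortA (e : Fin N → ℕ) : Antitone (sortA e) :=
  (Tuple.monotone_sort e).comp_antitone (fun _ _ h => Fin.rev_le_rev.mpr h)

lemma sortA_comp_perm (e : Fin N → ℕ) (σ : Equiv.Perm (Fin N)) : sortA (e ∘ σ) = sortA e := by
  unfold sortA
  rw [Tuple.comp_perm_comp_sort_eq_comp_sort]

lemma msort_of_monotone {g : Fin N → ℕ} (h : Monotone g) : g ∘ Tuple.sort g = g := by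
  have h' := (Tuple.comp_sort_eq_comp_iff_monotone (f := g) (σ := 1)).mpr (by simpa using h)
  simpa using h'.symm

lemma sortA_of_antitone {μ : Fin N → ℕ} (h : Antitone μ) : sortA μ = μ := by
  have hrev : Antitone (Fin.rev : Fin N → Fin N) := fun _ _ hab => Fin.rev_le_rev.mpr hab
  have h1 : Monotone (μ ∘ Fin.rev) := h.comp hrev
  have h2 : (μ ∘ ⇑(Fin.revPerm : Equiv.Perm (Fin N))) ∘
      Tuple.sort (μ ∘ ⇑(Fin.revPerm : Equiv.Perm (Fin N))) = μ ∘ Tuple.sort μ :=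
    Tuple.comp_perm_comp_sort_eq_comp_sort
  have h3 : μ ∘ Tuple.sort μ = μ ∘ Fin.rev := by
    rw [← h2]
    exact msort_of_monotone (by exact h1)
  unfold sortA
  rw [h3]
  ext i
  simp [Fin.rev_rev]

lemma comp_sortA (e : Fin N → ℕ) :
    e ∘ ⇑((Fin.revPerm : Equiv.Perm (Fin N)).trans (Tuple.sort e)) = sortA e := by
  ext i
  simp [sortA, Equiv.trans_apply]

/-- Finite products of summable nonnegative series over `ℕ` expand as a sum over
exponent vectors. -/
lemma prod_tsum_pi : ∀ (n : ℕ) (f : Fin n → ℕ → ℝ), (∀ i k, 0 ≤ f i k) → (∀ i, Summable (f i)) →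
    Summable (fun e : Fin n → ℕ => ∏ i, f i (e i)) ∧
      (∏ i, ∑' k, f i k) = ∑' e : Fin n → ℕ, ∏ i, f i (e i) := by
  intro n
  induction n with
  | zero =>
    intro f _ _
    have hs : HasSum (fun e : Fin 0 → ℕ => ∏ i, f i (e i)) 1 := by
      have h := hasSum_single (f := fun e : Fin 0 → ℕ => ∏ i, f i (e i))
        (default : Fin 0 → ℕ) (fun b hb => absurd (Subsingleton.elim b default) hb)
      simpa using h
    refine ⟨hs.summable, ?_⟩
    rw [hs.tsum_eq]
    simp
  | succ n ih =>
    intro f h0 hs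
    obtain ⟨ihS, ihE⟩ := ih (fun i => f i.succ) (fun i k => h0 _ _) (fun i => hs _)
    set G : (Fin n → ℕ) → ℝ := fun e => ∏ i, f i.succ (e i) with hGdef
    have hG0 : (0 : (Fin n → ℕ) → ℝ) ≤ G := fun e => Finset.prod_nonneg fun i _ => h0 _ _
    have hf0 : (0 : ℕ → ℝ) ≤ f 0 := fun k => h0 0 k
    have hsum2 : Summable (fun p : ℕ × (Fin n → ℕ) => f 0 p.1 * G p.2) :=
      (hs 0).mul_of_nonneg ihS hf0 hG0
    have key : (∑' k, f 0 k) * (∑' e, G e) = ∑' p : ℕ × (Fin n → ℕ), f 0 p.1 * G p.2 :=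
      Summable.tsum_mul_tsum (hs 0) ihS hsum2
    let E : (Fin (n+1) → ℕ) ≃ ℕ × (Fin n → ℕ) := (Fin.consEquiv fun _ => ℕ).symm
    have hE : ∀ e : Fin (n+1) → ℕ, (∏ i, f i (e i)) = f 0 (E e).1 * G (E e).2 := by
      intro e
      rw [Fin.prod_univ_succ]
      rfl
    constructor
    · exact (hsum2.comp_injective E.injective).congr fun e => (hE e).symm
    · calc ∏ i : Fin (n+1), ∑' k, f i k
          = (∑' k, f 0 k) * ∏ i : Fin n, ∑' k, f i.succ k := Fin.prod_univ_succ _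
        _ = (∑' k, f 0 k) * ∑' e : Fin n → ℕ, G e := by rw [ihE]
        _ = ∑' p : ℕ × (Fin n → ℕ), f 0 p.1 * G p.2 := key
        _ = ∑' e : Fin (n+1) → ℕ, ∏ i, f i (e i) := by
            rw [← E.tsum_eq (fun p : ℕ × (Fin n → ℕ) => f 0 p.1 * G p.2)]
            exact tsum_congr fun e => (hE e).symm

end SignedPermAux

open SignedPermAux

/-- summing `exp(x·ρy)` over the hyperoctahedral group `W_B` of signed
permutations `ρ : y ↦ (ε_1 y_{σ(1)}, …, ε_N y_{σ(N)})` gives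
`2^N N! ∑_μ m_μ(x²) m_μ(y²) / ((2μ)!·M(μ,N))`. -/
theorem signed_perm_sum_exp_eq_monoSym_expansion (N : ℕ) (hN : 1 ≤ N) (x y : Fin N → ℝ) :
    ∑ σ : Equiv.Perm (Fin N), ∑ ε : Fin N → Bool,
        Real.exp (∑ i, x i * ((if ε i then (1 : ℝ) else -1) * y (σ i)))
      = 2 ^ N * (Nat.factorial N : ℝ) *
          ∑' μ : {μ : Fin N → ℕ // Antitone μ},
            monoSym μ.1 (fun i => (x i) ^ 2) * monoSym μ.1 (fun i => (y i) ^ 2)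
              / ((∏ j, (Nat.factorial (2 * μ.1 j) : ℝ)) * (numDistinctPerms μ.1 : ℝ)) := by
  classical
  -- per-(σ,i) series for cosh
  set f : Equiv.Perm (Fin N) → Fin N → ℕ → ℝ :=
    fun σ i k => (x i ^ 2 * y (σ i) ^ 2) ^ k / ((2 * k).factorial : ℝ) with hf
  have hf0 : ∀ σ i k, 0 ≤ f σ i k := by
    intro σ i k
    apply div_nonneg (pow_nonneg (by positivity) _) (by positivity)
  have hcosh : ∀ σ i, HasSum (f σ i) (Real.cosh (x i * y (σ i))) := by
    intro σ i
    have h := Real.hasSum_cosh (x i * y (σ i))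
    refine h.congr_fun fun k => ?_
    rw [hf]
    rw [pow_mul, mul_pow]
  -- step 1 : sum over sign vectors yields a product of cosh's
  have step1 : ∀ σ : Equiv.Perm (Fin N),
      ∑ ε : Fin N → Bool, Real.exp (∑ i, x i * ((if ε i then (1 : ℝ) else -1) * y (σ i)))
        = 2 ^ N * ∏ i, Real.cosh (x i * y (σ i)) := by
    intro σ
    have hexp : ∀ ε : Fin N → Bool,
        Real.exp (∑ i, x i * ((if ε i then (1 : ℝ) else -1) * y (σ i)))
          = ∏ i, Real.exp (x i * ((if ε i then (1 : ℝ) else -1) * y (σ i))) :=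
      fun ε => Real.exp_sum _ _
    simp_rw [hexp]
    rw [← Fintype.prod_sum (fun i (b : Bool) => Real.exp (x i * ((if b then (1:ℝ) else -1) * y (σ i))))]
    rw [show (2 : ℝ) ^ N * ∏ i, Real.cosh (x i * y (σ i))
        = ∏ i, (2 * Real.cosh (x i * y (σ i))) by
      rw [Finset.prod_mul_distrib, Finset.prod_const]; simp [Finset.card_univ]]
    refine Finset.prod_congr rfl fun i _ => ?_
    rw [Fintype.sum_bool, Real.cosh_eq, if_pos rfl, if_neg (by decide)]
    rw [show x i * ((1 : ℝ) * y (σ i)) = x i * y (σ i) by ring,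
      show x i * ((-1 : ℝ) * y (σ i)) = -(x i * y (σ i)) by ring]
    ring
  -- step 2 : expand each product of cosh's as a sum over exponent vectors
  have hPT : ∀ σ : Equiv.Perm (Fin N),
      Summable (fun e : Fin N → ℕ => ∏ i, f σ i (e i)) ∧
        (∏ i, ∑' k, f σ i k) = ∑' e : Fin N → ℕ, ∏ i, f σ i (e i) :=
    fun σ => prod_tsum_pi N (f σ) (hf0 σ) (fun i => (hcosh σ i).summable)
  have step2 : ∀ σ : Equiv.Perm (Fin N),
      (∏ i, Real.cosh (x i * y (σ i))) = ∑' e : Fin N → ℕ, ∏ i, f σ i (e i) := by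
    intro σ
    rw [← (hPT σ).2]
    exact Finset.prod_congr rfl fun i _ => ((hcosh σ i).tsum_eq).symm
  -- the global coefficient function
  set G : (Fin N → ℕ) → ℝ := fun e => ∑ σ : Equiv.Perm (Fin N), ∏ i, f σ i (e i) with hG
  have hGsum : Summable G := by
    apply summable_sum
    intro σ _
    exact (hPT σ).1
  have step3 : ∑ σ : Equiv.Perm (Fin N), ∑ ε : Fin N → Bool,
      Real.exp (∑ i, x i * ((if ε i then (1 : ℝ) else -1) * y (σ i)))
        = 2 ^ N * ∑' e : Fin N → ℕ, G e := by
    calc ∑ σ : Equiv.Perm (Fin N), ∑ ε : Fin N → Bool,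
        Real.exp (∑ i, x i * ((if ε i then (1 : ℝ) else -1) * y (σ i)))
        = ∑ σ : Equiv.Perm (Fin N), 2 ^ N * ∑' e : Fin N → ℕ, ∏ i, f σ i (e i) := by
          refine Finset.sum_congr rfl fun σ _ => ?_
          rw [step1 σ, step2 σ]
      _ = 2 ^ N * ∑ σ : Equiv.Perm (Fin N), ∑' e : Fin N → ℕ, ∏ i, f σ i (e i) := by
          rw [Finset.mul_sum]
      _ = 2 ^ N * ∑' e : Fin N → ℕ, G e := by
          rw [hG, ← Summable.tsum_finsetSum (fun σ _ => (hPT σ).1)]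
  -- fiberwise decomposition over sorted exponent vectors
  set T := {μ : Fin N → ℕ // Antitone μ} with hT
  set s : (Fin N → ℕ) → T := fun e => ⟨sortA e, antitone_sortA e⟩ with hs
  have hfiber : ∀ μ : T, s ⁻¹' {μ} = ↑(orbit μ.1) := by
    intro μ
    ext e
    simp only [Set.mem_preimage, Set.mem_singleton_iff, Finset.coe_image, orbit,
      Set.mem_image, Finset.mem_coe, Finset.mem_image, Finset.mem_univ, true_and]
    constructor
    · intro h
      have h' : sortA e = μ.1 := congrArg Subtype.val h
      refine ⟨((Fin.revPerm : Equiv.Perm (Fin N)).trans (Tuple.sort e))⁻¹, ?_⟩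
      rw [← h', ← comp_sortA e]
      ext i
      simp [Equiv.Perm.inv_def, Equiv.symm_trans_apply, Fin.rev_rev]
    · rintro ⟨σ, rfl⟩
      apply Subtype.ext
      show sortA (μ.1 ∘ σ) = μ.1
      rw [sortA_comp_perm, sortA_of_antitone μ.2]
  have hdecomp : ∑' e : Fin N → ℕ, G e = ∑' μ : T, ∑ e ∈ orbit μ.1, G e := by
    have h := (hGsum.hasSum.tsum_fiberwise s).tsum_eq
    rw [← h]
    refine tsum_congr fun μ => ?_
    rw [tsum_congr_set_coe G (hfiber μ), Finset.tsum_subtype']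
  -- compute the sum over each orbit
  have horbit : ∀ μ : T, ∑ e ∈ orbit μ.1, G e
      = (stab μ.1 : ℝ) * monoSym μ.1 (fun i => (x i) ^ 2) * monoSym μ.1 (fun i => (y i) ^ 2)
          / (∏ j, (Nat.factorial (2 * μ.1 j) : ℝ)) := by
    intro μ
    have hGe : ∀ e ∈ orbit μ.1, G e
        = ((stab μ.1 : ℝ) * monoSym μ.1 (fun i => (y i) ^ 2)
            / (∏ j, (Nat.factorial (2 * μ.1 j) : ℝ))) * ∏ i, (x i ^ 2) ^ e i := by
      intro e he
      simp only [orbit, Finset.mem_image, Finset.mem_univ, true_and] at he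
      obtain ⟨σ0, he⟩ := he
      have hprod : ∀ σ : Equiv.Perm (Fin N), (∏ i, f σ i (e i))
          = ((∏ i, (x i ^ 2) ^ e i) * ∏ i, (y (σ i) ^ 2) ^ e i)
              / ∏ i, ((2 * e i).factorial : ℝ) := by
        intro σ
        have hpt : ∀ i, f σ i (e i)
            = ((x i ^ 2) ^ e i * (y (σ i) ^ 2) ^ e i) / ((2 * e i).factorial : ℝ) := by
          intro i
          simp only [hf]
          rw [mul_pow]
        simp_rw [hpt]
        rw [Finset.prod_div_distrib, Finset.prod_mul_distrib]
      have hfac : (∏ i, ((2 * e i).factorial : ℝ)) = ∏ j, (Nat.factorial (2 * μ.1 j) : ℝ) := by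
        rw [← he]
        exact Equiv.prod_comp σ0 (fun j => ((2 * μ.1 j).factorial : ℝ))
      have hstab : stab e = stab μ.1 := stab_eq_of_mem μ.1 e σ0 he
      have horb : orbit e = orbit μ.1 := by rw [← he]; exact orbit_comp μ.1 σ0
      rw [hG]
      simp_rw [hprod]
      rw [← Finset.sum_div, ← Finset.mul_sum]
      rw [show ∑ σ : Equiv.Perm (Fin N), ∏ i, (y (σ i) ^ 2) ^ e i
          = (stab e : ℝ) * ∑ g ∈ orbit e, ∏ j, ((y j) ^ 2) ^ g j from
        sum_perm_pow (fun j => (y j) ^ 2) e]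
      rw [hstab, horb, hfac]
      have : monoSym μ.1 (fun i => (y i) ^ 2) = ∑ g ∈ orbit μ.1, ∏ j, ((y j) ^ 2) ^ g j := rfl
      rw [← this]
      ring
    rw [Finset.sum_congr rfl hGe, ← Finset.mul_sum]
    have : monoSym μ.1 (fun i => (x i) ^ 2) = ∑ e ∈ orbit μ.1, ∏ i, ((x i) ^ 2) ^ e i := rfl
    rw [← this]
    ring
  -- put everything together
  rw [step3, hdecomp, mul_assoc]
  refine congrArg (fun r => (2:ℝ) ^ N * r) ?_
  rw [← tsum_mul_left]
  refine tsum_congr fun μ => ?_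
  rw [horbit μ]
  have hMcard : (numDistinctPerms μ.1 : ℕ) = (orbit μ.1).card := rfl
  have hkey : (stab μ.1 : ℝ) * (numDistinctPerms μ.1 : ℝ) = (Nat.factorial N : ℝ) := by
    rw [← Nat.cast_mul, hMcard, stab_mul_card μ.1]
  have hM0 : (numDistinctPerms μ.1 : ℝ) ≠ 0 := by
    have : 0 < (orbit μ.1).card := Finset.card_pos.mpr ⟨μ.1, self_mem_orbit μ.1⟩
    rw [hMcard] at *
    exact_mod_cast this.ne'
  have hc0 : (∏ j, (Nat.factorial (2 * μ.1 j) : ℝ)) ≠ 0 := by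
    apply Finset.prod_ne_zero_iff.mpr
    intro j _
    exact_mod_cast (Nat.factorial_pos _).ne'
  rw [← hkey]
  field_simp
end

section
/- Let N ≥ 1 and let τ = (τ_1 ≥ τ_2 ≥ … ≥ τ_m > 0) be an integer partition with m ≤ N parts and |τ| = ∑_i τ_i = n ≥ 1, with conjugate partition entries τ'_j = #{i : τ_i ≥ j}. Consider the product P(β) = ∏_{(i,j)∈τ} (τ_i − j + β(τ'_j − i + 1)/2) / [ (β(N − i + 1)/2 + j − 1) · (τ_i − j + 1 + β(τ'_j − i)/2) ], where (i,j) ∈ τ means 1 ≤ i ≤ m and 1 ≤ j ≤ τ_i. Then as β → ∞: if τ has exactly one part (m = 1, so τ = (n)), P(β) converges to 1/(N^n · n!); if τ has more than one part (m ≥ 2), P(β) converges to 0. -/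
open Finset Filter

private lemma jpfl_fact (n : ℕ) :
    ∏ j ∈ Finset.Icc 1 n, ((n:ℝ) - j + 1) = (Nat.factorial n : ℝ) := by
  have h1 : ∀ j ∈ Finset.Icc 1 n, ((n:ℝ) - j + 1) = ((n + 1 - j : ℕ) : ℝ) := by
    intro j hj
    rw [mem_Icc] at hj
    rw [Nat.cast_sub (by omega : j ≤ n + 1)]
    push_cast; ring
  rw [Finset.prod_congr rfl h1, ← Nat.cast_prod]
  congr 1
  have h2 : ∏ j ∈ Finset.Icc 1 n, (n + 1 - j) = ∏ j ∈ Finset.Icc 1 n, j := by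
    refine Finset.prod_nbij' (fun j => n + 1 - j) (fun j => n + 1 - j) ?_ ?_ ?_ ?_ ?_ <;>
      simp only [mem_Icc] <;> intro a ha <;> first | trivial | omega
  rw [h2, ← Finset.Ico_add_one_right_eq_Icc, prod_Ico_id_eq_factorial]

private lemma jpfl_aux1 (a c k b d : ℝ) (hd : d ≠ 0) (hb : b ≠ 0) :
    Tendsto (fun β : ℝ => (a + β * c / 2) / ((β * d / 2 + k) * b)) atTop
      (nhds (c / (d * b))) := by
  have h0 : Tendsto (fun β : ℝ => β⁻¹) atTop (nhds 0) := tendsto_inv_atTop_zero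
  have hnum : Tendsto (fun β : ℝ => a * β⁻¹ + c / 2) atTop (nhds (c / 2)) := by
    simpa using (h0.const_mul a).add_const (c / 2)
  have hden : Tendsto (fun β : ℝ => (d / 2 + k * β⁻¹) * b) atTop (nhds (d / 2 * b)) := by
    simpa using ((h0.const_mul k).const_add (d / 2)).mul_const b
  have hne : d / 2 * b ≠ 0 := mul_ne_zero (by simpa using hd) hb
  have h := hnum.div hden hne
  have hval : c / 2 / (d / 2 * b) = c / (d * b) := by
    field_simp
  rw [hval] at h
  refine h.congr' ?_
  filter_upwards [eventually_gt_atTop (0 : ℝ)] with β hβ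
  have hβ0 : β ≠ 0 := hβ.ne'
  have hβ' : β⁻¹ ≠ 0 := inv_ne_zero hβ0
  have e1 : a * β⁻¹ + c / 2 = (a + β * c / 2) * β⁻¹ := by
    rw [add_mul, show β * c / 2 = c / 2 * β by ring, mul_inv_cancel_right₀ hβ0]
  have e2 : (d / 2 + k * β⁻¹) * b = ((β * d / 2 + k) * b) * β⁻¹ := by
    have t1 : (β * d / 2 + k) * β⁻¹ = d / 2 + k * β⁻¹ := by
      rw [add_mul, show β * d / 2 = d / 2 * β by ring, mul_inv_cancel_right₀ hβ0]
    rw [← t1]; ring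
  simp only [Pi.div_apply]
  rw [e1, e2, mul_div_mul_right _ _ hβ']

private lemma jpfl_aux2 (a c k b d e : ℝ) (hd : d ≠ 0) (he : e ≠ 0) :
    Tendsto (fun β : ℝ => (a + β * c / 2) / ((β * d / 2 + k) * (b + β * e / 2))) atTop
      (nhds 0) := by
  have h0 : Tendsto (fun β : ℝ => β⁻¹) atTop (nhds 0) := tendsto_inv_atTop_zero
  have hnum : Tendsto (fun β : ℝ => (a * β⁻¹ + c / 2) * β⁻¹) atTop (nhds 0) := by
    have h1 : Tendsto (fun β : ℝ => a * β⁻¹ + c / 2) atTop (nhds (c / 2)) := by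
      simpa using (h0.const_mul a).add_const (c / 2)
    simpa using h1.mul h0
  have hden : Tendsto (fun β : ℝ => (d / 2 + k * β⁻¹) * (b * β⁻¹ + e / 2)) atTop
      (nhds (d / 2 * (e / 2))) := by
    have h1 : Tendsto (fun β : ℝ => d / 2 + k * β⁻¹) atTop (nhds (d / 2)) := by
      simpa using (h0.const_mul k).const_add (d / 2)
    have h2 : Tendsto (fun β : ℝ => b * β⁻¹ + e / 2) atTop (nhds (e / 2)) := by
      simpa using (h0.const_mul b).add_const (e / 2)
    exact h1.mul h2
  have hne : d / 2 * (e / 2) ≠ 0 :=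
    mul_ne_zero (by simpa using hd) (by simpa using he)
  have h := hnum.div hden hne
  rw [zero_div] at h
  refine h.congr' ?_
  filter_upwards [eventually_gt_atTop (0 : ℝ)] with β hβ
  have hβ0 : β ≠ 0 := hβ.ne'
  have hβ' : β⁻¹ ≠ 0 := inv_ne_zero hβ0
  have t1 : (β * d / 2 + k) * β⁻¹ = d / 2 + k * β⁻¹ := by
    rw [add_mul, show β * d / 2 = d / 2 * β by ring, mul_inv_cancel_right₀ hβ0]
  have t2 : (b + β * e / 2) * β⁻¹ = b * β⁻¹ + e / 2 := by
    rw [add_mul, show β * e / 2 = e / 2 * β by ring, mul_inv_cancel_right₀ hβ0]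
  have t3 : (a + β * c / 2) * β⁻¹ = a * β⁻¹ + c / 2 := by
    rw [add_mul, show β * c / 2 = c / 2 * β by ring, mul_inv_cancel_right₀ hβ0]
  have e1 : (a * β⁻¹ + c / 2) * β⁻¹ = (a + β * c / 2) * (β⁻¹ * β⁻¹) := by
    rw [← t3]; ring
  have e2 : (d / 2 + k * β⁻¹) * (b * β⁻¹ + e / 2)
      = ((β * d / 2 + k) * (b + β * e / 2)) * (β⁻¹ * β⁻¹) := by
    rw [← t1, ← t2]; ring
  simp only [Pi.div_apply]
  rw [e1, e2, mul_div_mul_right _ _ (mul_ne_zero hβ' hβ')]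

/-- the freezing limit `β → ∞` of the product
`P(β) = ∏_{(i,j)∈τ} (τ_i − j + β(τ'_j − i + 1)/2) /
        [(β(N−i+1)/2 + j − 1)(τ_i − j + 1 + β(τ'_j − i)/2)]`
is `1/(N^n n!)` when the partition `τ` has a single part, and `0` when it has at least two
parts. Here the parts are `τ 1 ≥ … ≥ τ m > 0`, `n = |τ|`, and `τ'` is the conjugate. -/
theorem jack_product_freezing_limit (N m : ℕ) (hm : 1 ≤ m) (hmN : m ≤ N) (τ : ℕ → ℕ)
    (hpos : ∀ i ∈ Finset.Icc 1 m, 0 < τ i)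
    (hdec : ∀ i j : ℕ, 1 ≤ i → i ≤ j → j ≤ m → τ j ≤ τ i) :
    let τ' : ℕ → ℕ := fun j => ((Finset.Icc 1 m).filter fun i => j ≤ τ i).card
    let n : ℕ := ∑ i ∈ Finset.Icc 1 m, τ i
    let P : ℝ → ℝ := fun β =>
      ∏ i ∈ Finset.Icc 1 m, ∏ j ∈ Finset.Icc 1 (τ i),
        (((τ i : ℝ) - (j : ℝ)) + β * ((τ' j : ℝ) - (i : ℝ) + 1) / 2)
          / ((β * ((N : ℝ) - (i : ℝ) + 1) / 2 + (j : ℝ) - 1)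
              * (((τ i : ℝ) - (j : ℝ) + 1) + β * ((τ' j : ℝ) - (i : ℝ)) / 2))
    (m = 1 → Tendsto P atTop (nhds (1 / ((N : ℝ) ^ n * (Nat.factorial n : ℝ))))) ∧
    (2 ≤ m → Tendsto P atTop (nhds 0)) := by
  intro τ' n P
  -- basic facts about the conjugate partition
  have hτ'ge : ∀ i ∈ Finset.Icc 1 m, ∀ j ∈ Finset.Icc 1 (τ i), i ≤ τ' j := by
    intro i hi j hj
    rw [mem_Icc] at hi hj
    have hsub : Finset.Icc 1 i ⊆ (Finset.Icc 1 m).filter fun i' => j ≤ τ i' := by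
      intro i' hi'
      rw [mem_Icc] at hi'
      rw [mem_filter, mem_Icc]
      exact ⟨⟨hi'.1, le_trans hi'.2 hi.2⟩,
        le_trans hj.2 (hdec i' i hi'.1 hi'.2 hi.2)⟩
    calc i = (Finset.Icc 1 i).card := by rw [Nat.card_Icc]; omega
    _ ≤ _ := Finset.card_le_card hsub
  -- the limit of each factor
  set L : ℕ → ℕ → ℝ := fun i j =>
    if τ' j = i then 1 / ((((N : ℝ) - i + 1)) * ((τ i : ℝ) - j + 1)) else 0 with hL
  have hfac : ∀ i ∈ Finset.Icc 1 m, ∀ j ∈ Finset.Icc 1 (τ i),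
      Tendsto (fun β : ℝ =>
        (((τ i : ℝ) - (j : ℝ)) + β * ((τ' j : ℝ) - (i : ℝ) + 1) / 2)
          / ((β * ((N : ℝ) - (i : ℝ) + 1) / 2 + (j : ℝ) - 1)
              * (((τ i : ℝ) - (j : ℝ) + 1) + β * ((τ' j : ℝ) - (i : ℝ)) / 2)))
        atTop (nhds (L i j)) := by
    intro i hi j hj
    have hi' := hi; have hj' := hj
    rw [mem_Icc] at hi' hj'
    have hdne : ((N : ℝ) - i + 1) ≠ 0 := by
      have : (i : ℝ) ≤ (N : ℝ) := by exact_mod_cast le_trans hi'.2 hmN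
      nlinarith
    by_cases h : τ' j = i
    · -- column height equals i : finite nonzero limit
      have hbne : ((τ i : ℝ) - j + 1) ≠ 0 := by
        have : (j : ℝ) ≤ (τ i : ℝ) := by exact_mod_cast hj'.2
        nlinarith
      have key := jpfl_aux1 ((τ i : ℝ) - j) (((τ' j : ℝ) - i + 1)) ((j : ℝ) - 1)
        ((τ i : ℝ) - j + 1) ((N : ℝ) - i + 1) hdne hbne
      have hc1 : ((τ' j : ℝ) - i + 1) = 1 := by rw [h]; ring
      rw [hL]
      simp only [if_pos h]
      have hval : ((τ' j : ℝ) - i + 1) / (((N : ℝ) - i + 1) * ((τ i : ℝ) - j + 1))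
          = 1 / (((N : ℝ) - i + 1) * ((τ i : ℝ) - j + 1)) := by rw [hc1]
      rw [← hval]
      refine key.congr fun β => ?_
      have he0 : ((τ' j : ℝ) - i) = 0 := by rw [h]; ring
      rw [he0]
      ring
    · -- column height exceeds i : limit zero
      have hgt : i < τ' j := lt_of_le_of_ne (hτ'ge i hi j hj) (Ne.symm h)
      have hene : ((τ' j : ℝ) - i) ≠ 0 := by
        have : (i : ℝ) < (τ' j : ℝ) := by exact_mod_cast hgt
        nlinarith
      have key := jpfl_aux2 ((τ i : ℝ) - j) (((τ' j : ℝ) - i + 1)) ((j : ℝ) - 1)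
        ((τ i : ℝ) - j + 1) ((N : ℝ) - i + 1) ((τ' j : ℝ) - i) hdne hene
      rw [hL]
      simp only [if_neg h]
      refine key.congr fun β => ?_
      ring_nf
  -- the full product converges to the product of the limits
  have hP : Tendsto P atTop
      (nhds (∏ i ∈ Finset.Icc 1 m, ∏ j ∈ Finset.Icc 1 (τ i), L i j)) := by
    refine tendsto_finset_prod _ fun i hi => ?_
    exact tendsto_finset_prod _ fun j hj => hfac i hi j hj
  constructor
  · -- single part : τ = (n)
    intro hm1
    subst hm1
    have hn : n = τ 1 := by simp [n]
    have hτ'1 : ∀ j ∈ Finset.Icc 1 (τ 1), τ' j = 1 := by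
      intro j hj
      rw [mem_Icc] at hj
      show ((Finset.Icc 1 1).filter fun i => j ≤ τ i).card = 1
      rw [Finset.filter_true_of_mem, Nat.card_Icc]
      intro i hi
      rw [mem_Icc] at hi
      have : i = 1 := le_antisymm hi.2 hi.1
      rw [this]; exact hj.2
    have hprod : ∏ i ∈ Finset.Icc 1 1, ∏ j ∈ Finset.Icc 1 (τ i), L i j
        = 1 / ((N : ℝ) ^ n * (Nat.factorial n : ℝ)) := by
      rw [Finset.Icc_self, Finset.prod_singleton]
      have h1 : ∀ j ∈ Finset.Icc 1 (τ 1), L 1 j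
          = 1 / ((N : ℝ) * ((τ 1 : ℝ) - j + 1)) := by
        intro j hj
        rw [hL]
        simp only [hτ'1 j hj, if_pos rfl]
        norm_num
      rw [Finset.prod_congr rfl h1]
      rw [Finset.prod_div_distrib, Finset.prod_const_one, Finset.prod_mul_distrib,
        Finset.prod_const, jpfl_fact (τ 1), Nat.card_Icc, hn]
      norm_num
    rwa [hprod] at hP
  · -- at least two parts
    intro hm2
    have hzero : ∏ i ∈ Finset.Icc 1 m, ∏ j ∈ Finset.Icc 1 (τ i), L i j = 0 := by
      apply Finset.prod_eq_zero (i := 1) (by rw [mem_Icc]; omega)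
      apply Finset.prod_eq_zero (i := 1)
        (by rw [mem_Icc]; exact ⟨le_refl 1, hpos 1 (by rw [mem_Icc]; omega)⟩)
      have hτ'1 : τ' 1 = m := by
        show ((Finset.Icc 1 m).filter fun i => 1 ≤ τ i).card = m
        rw [Finset.filter_true_of_mem (p := fun i => 1 ≤ τ i) fun i hi => hpos i hi, Nat.card_Icc]
        omega
      rw [hL]
      simp only [hτ'1]
      rw [if_neg (by omega)]
    rwa [hzero] at hP
end
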